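/- Let p = (p₁,…,p_{n₁}) and q = (q₁,…,q_{n₂}) be probability vectors of positive reals, each summing to 1 and arranged in non-increasing order, and let L ≥ 1. For any length functions ℓ₁ : {1,…,n₁} → ℕ⁺ ∪ {∞} and ℓ₂ : {1,…,n₂} → ℕ⁺ ∪ {∞} each satisfying Kraft's inequality Σᵢ 2^{−ℓ(i)} ≤ 1 (with 2^{−∞} := 0), there exist length functions ℓ₁', ℓ₂' satisfying Kraft's inequality that are non-decreasing in the index (with ∞ treated as the largest value, so that unassigned indices form a final segment) such that Σᵢ Σⱼ pᵢ qⱼ 𝟙[ℓ₁'(i) + ℓ₂'(j) ≤ L] ≥ Σᵢ Σⱼ pᵢ qⱼ 𝟙[ℓ₁(i) + ℓ₂(j) ≤ L]. In particular, for any entry distribution and any width L, there exists a monotone optimal coding scheme. -/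

import Mathlib

/-- The Kraft term `2^{-l}` of an (extended) codeword length `l ∈ ℕ ∪ {∞}`,
with the convention `2^{-∞} = 0`. -/
noncomputable def kraftTerm (l : ℕ∞) : ℝ :=
  if l = ⊤ then 0 else ((2 : ℝ) ^ l.toNat)⁻¹

/-- Sorting one length function (rearrangement step). -/
lemma sort_step {n : ℕ} (p : Fin n → ℝ) (hpm : ∀ i j : Fin n, i ≤ j → p j ≤ p i)
    (ℓ : Fin n → ℕ∞) (g : ℕ∞ → ℝ) (hg : Antitone g) :
    ∃ σ : Equiv.Perm (Fin n), Monotone (ℓ ∘ σ) ∧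
      ∑ i, p i * g (ℓ i) ≤ ∑ i, p i * g (ℓ (σ i)) := by
  refine ⟨Tuple.sort ℓ, Tuple.monotone_sort ℓ, ?_⟩
  set σ := Tuple.sort ℓ
  have hmono : Monovary p (fun i => g (ℓ (σ i))) := by
    intro i j hij
    rcases le_or_gt i j with h | h
    · exact absurd (hg ((Tuple.monotone_sort ℓ) h)) (not_le.2 hij)
    · exact hpm j i h.le
  have := hmono.sum_mul_comp_perm_le_sum_mul (σ := σ⁻¹)
  simpa using this
  
theorem stmt2 (n₁ n₂ : ℕ) (p : Fin n₁ → ℝ) (q : Fin n₂ → ℝ)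
    (hp : ∀ i, 0 < p i) (hq : ∀ j, 0 < q j)
    (hps : ∑ i, p i = 1) (hqs : ∑ j, q j = 1)
    (hpm : ∀ i j : Fin n₁, i ≤ j → p j ≤ p i)
    (hqm : ∀ i j : Fin n₂, i ≤ j → q j ≤ q i)
    (L : ℕ) (hL : 1 ≤ L)
    (ℓ₁ : Fin n₁ → ℕ∞) (ℓ₂ : Fin n₂ → ℕ∞)
    (h₁pos : ∀ i, 1 ≤ ℓ₁ i) (h₂pos : ∀ j, 1 ≤ ℓ₂ j)
    (hk₁ : ∑ i, kraftTerm (ℓ₁ i) ≤ 1) (hk₂ : ∑ j, kraftTerm (ℓ₂ j) ≤ 1) :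
    ∃ (ℓ₁' : Fin n₁ → ℕ∞) (ℓ₂' : Fin n₂ → ℕ∞),
      (∀ i, 1 ≤ ℓ₁' i) ∧ (∀ j, 1 ≤ ℓ₂' j) ∧
      (∑ i, kraftTerm (ℓ₁' i) ≤ 1) ∧ (∑ j, kraftTerm (ℓ₂' j) ≤ 1) ∧
      Monotone ℓ₁' ∧ Monotone ℓ₂' ∧
      (∑ i, ∑ j, if ℓ₁ i + ℓ₂ j ≤ (L : ℕ∞) then p i * q j else 0) ≤
        ∑ i, ∑ j, if ℓ₁' i + ℓ₂' j ≤ (L : ℕ∞) then p i * q j else 0 := by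
  -- Step 1: sort ℓ₁
  obtain ⟨σ₁, hσ₁m, hσ₁⟩ := sort_step p hpm ℓ₁
    (fun l => ∑ j, if l + ℓ₂ j ≤ (L : ℕ∞) then q j else 0)
    (by
      intro a b hab
      apply Finset.sum_le_sum
      intro j _
      by_cases hb : b + ℓ₂ j ≤ (L : ℕ∞)
      · rw [if_pos hb, if_pos ((add_le_add_left hab _).trans hb)]
      · rw [if_neg hb]
        split <;> [exact (hq j).le; exact le_rfl])
  set ℓ₁' : Fin n₁ → ℕ∞ := ℓ₁ ∘ σ₁ with hℓ₁'
  -- Step 2: sort ℓ₂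
  obtain ⟨σ₂, hσ₂m, hσ₂⟩ := sort_step q hqm ℓ₂
    (fun l => ∑ i, if ℓ₁' i + l ≤ (L : ℕ∞) then p i else 0)
    (by
      intro a b hab
      apply Finset.sum_le_sum
      intro i _
      by_cases hb : ℓ₁' i + b ≤ (L : ℕ∞)
      · rw [if_pos hb, if_pos ((add_le_add_right hab _).trans hb)]
      · rw [if_neg hb]
        split <;> [exact (hp i).le; exact le_rfl])
  set ℓ₂' : Fin n₂ → ℕ∞ := ℓ₂ ∘ σ₂ with hℓ₂'
  have key : ∀ (f : Fin n₁ → ℕ∞) (g : Fin n₂ → ℕ∞),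
      ∑ i, ∑ j, (if f i + g j ≤ (L : ℕ∞) then p i * q j else 0) =
      ∑ i, p i * ∑ j, (if f i + g j ≤ (L : ℕ∞) then q j else 0) := by
    intro f g
    refine Finset.sum_congr rfl fun i _ => ?_
    rw [Finset.mul_sum]
    refine Finset.sum_congr rfl fun j _ => ?_
    rw [mul_ite, mul_zero]
  have key2 : ∀ (f : Fin n₁ → ℕ∞) (g : Fin n₂ → ℕ∞),
      ∑ i, ∑ j, (if f i + g j ≤ (L : ℕ∞) then p i * q j else 0) =
      ∑ j, q j * ∑ i, (if f i + g j ≤ (L : ℕ∞) then p i else 0) := by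
    intro f g
    rw [Finset.sum_comm]
    refine Finset.sum_congr rfl fun j _ => ?_
    rw [Finset.mul_sum]
    refine Finset.sum_congr rfl fun i _ => ?_
    rw [mul_ite, mul_zero, mul_comm]
  refine ⟨ℓ₁', ℓ₂', fun i => h₁pos _, fun j => h₂pos _, ?_, ?_, hσ₁m, hσ₂m, ?_⟩
  · exact le_trans (le_of_eq (Fintype.sum_equiv σ₁ _ _ fun i => rfl)) hk₁
  · exact le_trans (le_of_eq (Fintype.sum_equiv σ₂ _ _ fun j => rfl)) hk₂
  · calc ∑ i, ∑ j, (if ℓ₁ i + ℓ₂ j ≤ (L : ℕ∞) then p i * q j else 0)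
        ≤ ∑ i, ∑ j, (if ℓ₁' i + ℓ₂ j ≤ (L : ℕ∞) then p i * q j else 0) := by
          rw [key ℓ₁ ℓ₂, key ℓ₁' ℓ₂]; exact hσ₁
      _ ≤ ∑ i, ∑ j, (if ℓ₁' i + ℓ₂' j ≤ (L : ℕ∞) then p i * q j else 0) := by
          rw [key2 ℓ₁' ℓ₂, key2 ℓ₁' ℓ₂']; exact hσ₂
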